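/- Let V be a finite set, t ≥ 1, and P : V → ℤ/tℤ a map. Let R₁, …, R_d : V → V be functions such that P(R_i(v)) = P(v) + 1 for every i and every v ∈ V, and let S be the semigroup generated by R₁, …, R_d under composition. If x, y ∈ V are equivalent under the stability relation of S (i.e. for every W₁ ∈ S there exists W₂ ∈ S with W₂(W₁(x)) = W₂(W₁(y))), then P(x) = P(y). -/
import Mathlib


/-- Each stability class of a coloring semigroup of a periodic digraph is
contained in a single periodic partition class: if `x` and `y` are stable
(under the semigroup generated by colors `R₁, …, R_d`, each of which shifts
the periodic class by one) then `P x = P y`. -/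
theorem stability_class_subset_periodic_class {V : Type} [Fintype V]
    (d t : ℕ) (hd : 1 ≤ d) (ht : 1 ≤ t)
    (P : V → ZMod t) (R : Fin d → V → V)
    (hR : ∀ (i : Fin d) (v : V), P (R i v) = P v + 1)
    (x y : V)
    (hstab : ∀ W₁ ∈ (Subsemigroup.closure (Set.range R) : Subsemigroup (Function.End V)),
      ∃ W₂ ∈ (Subsemigroup.closure (Set.range R) : Subsemigroup (Function.End V)),
        (W₂ : V → V) ((W₁ : V → V) x) = (W₂ : V → V) ((W₁ : V → V) y)) :
    P x = P y := by
  -- every element of the closure shifts P by a fixed amount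
  have key : ∀ W ∈ (Subsemigroup.closure (Set.range R) : Subsemigroup (Function.End V)),
      ∃ n : ZMod t, ∀ v : V, P ((W : V → V) v) = P v + n := by
    intro W hW
    induction hW using Subsemigroup.closure_induction with
    | mem a ha =>
      obtain ⟨i, rfl⟩ := ha
      exact ⟨1, fun v => hR i v⟩
    | mul a b _ _ ha hb =>
      obtain ⟨m, hm⟩ := ha
      obtain ⟨n, hn⟩ := hb
      exact ⟨n + m, fun v => by
        show P ((a : V → V) ((b : V → V) v)) = P v + (n + m)
        rw [hm, hn, add_assoc]⟩
  have h0 : (⟨0, hd⟩ : Fin d) = ⟨0, hd⟩ := rfl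
  have hmem : (R ⟨0, hd⟩ : Function.End V) ∈
      (Subsemigroup.closure (Set.range R) : Subsemigroup (Function.End V)) :=
    Subsemigroup.subset_closure ⟨⟨0, hd⟩, rfl⟩
  obtain ⟨W₂, hW₂, heq⟩ := hstab _ hmem
  obtain ⟨n, hn⟩ := key W₂ hW₂
  have hx := hn (R ⟨0, hd⟩ x)
  have hy := hn (R ⟨0, hd⟩ y)
  rw [heq] at hx
  have : P (R ⟨0, hd⟩ x) = P (R ⟨0, hd⟩ y) := by
    have := hx.symm.trans hy
    exact add_right_cancel this
  rw [hR, hR] at this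
  exact add_right_cancel this
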